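/- A continuous function f: ℝ^d → ℂ that never vanishes, is 2π-periodic in each coordinate, and satisfies f(0)=1, has distinguished logarithm Ln f such that t ↦ Ln f(t) − i⟨t,γ⟩ is 2π-periodic in each coordinate, where γ ∈ ℤ^d is defined by γ_k = (Ln f(t + 2π e_k) − Ln f(t))/(2πi) (which is constant in t). -/

import Mathlib

open scoped RealInnerProductSpace

/-- For a continuous nowhere-vanishing `f` on `ℝ^d` that is `2π`-periodic in each
coordinate with `f 0 = 1`, the distinguished logarithm `L` satisfies
`L (t + 2π e_k) - L t = 2πi γ_k` for a fixed `γ ∈ ℤ^d`, and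
`t ↦ L t - i⟨t, γ⟩` is `2π`-periodic in each coordinate. -/
theorem stmt1 (d : ℕ) (f L : EuclideanSpace ℝ (Fin d) → ℂ)
    (hf : Continuous f) (hfne : ∀ t, f t ≠ 0) (hf0 : f 0 = 1)
    (hper : ∀ (t : EuclideanSpace ℝ (Fin d)) (k : Fin d),
      f (t + (2 * Real.pi) • EuclideanSpace.single k 1) = f t)
    (hL : Continuous L) (hL0 : L 0 = 0) (hexp : ∀ t, Complex.exp (L t) = f t) :
    ∃ γ : Fin d → ℤ,
      (∀ (k : Fin d) (t : EuclideanSpace ℝ (Fin d)),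
        L (t + (2 * Real.pi) • EuclideanSpace.single k 1) - L t
          = 2 * Real.pi * Complex.I * (γ k : ℂ)) ∧
      (∀ (k : Fin d) (t : EuclideanSpace ℝ (Fin d)),
        L (t + (2 * Real.pi) • EuclideanSpace.single k 1)
            - Complex.I *
              ((⟪t + (2 * Real.pi) • EuclideanSpace.single k 1,
                  (WithLp.equiv 2 (Fin d → ℝ)).symm (fun j => (γ j : ℝ))⟫ : ℝ) : ℂ)
          = L t - Complex.I *
              ((⟪t, (WithLp.equiv 2 (Fin d → ℝ)).symm (fun j => (γ j : ℝ))⟫ : ℝ) : ℂ)) := by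
  set e : Fin d → EuclideanSpace ℝ (Fin d) :=
    fun k => (2 * Real.pi) • EuclideanSpace.single k 1 with he
  have hint : ∀ (k : Fin d) (t : EuclideanSpace ℝ (Fin d)),
      ∃ n : ℤ, L (t + e k) - L t = n * (2 * Real.pi * Complex.I) := by
    intro k t
    apply Complex.exp_eq_one_iff.mp
    rw [Complex.exp_sub, hexp, hexp, hper]
    exact div_self (hfne t)
  choose n hn using hint
  -- n k t is constant in t
  have hconst : ∀ (k : Fin d) (t : EuclideanSpace ℝ (Fin d)), n k t = n k 0 := by
    intro k t
    have hcont : Continuous fun s => (L (s + e k) - L s).im :=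
      (Complex.continuous_im.comp
        ((hL.comp (continuous_id.add continuous_const)).sub hL))
    have him : ∀ s, (L (s + e k) - L s).im = (n k s : ℝ) * (2 * Real.pi) := by
      intro s
      rw [hn k s]
      simp [Complex.mul_im]
    have hmem : ∀ s : EuclideanSpace ℝ (Fin d),
        (L (s + e k) - L s).im ∈ (AddSubgroup.zmultiples (2 * Real.pi) : Set ℝ) := by
      intro s
      rw [him s]
      exact ⟨n k s, by simp [zsmul_eq_mul]⟩
    haveI : DiscreteTopology ((AddSubgroup.zmultiples (2 * Real.pi) : AddSubgroup ℝ) : Set ℝ) :=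
      inferInstanceAs (DiscreteTopology (AddSubgroup.zmultiples (2 * Real.pi)))
    have : (L (t + e k) - L t).im = (L ((0 : EuclideanSpace ℝ (Fin d)) + e k) - L 0).im := by
      refine IsPreconnected.constant_of_mapsTo (isPreconnected_univ) (isDiscrete_iff_discreteTopology.mpr this)
        (hcont.continuousOn) (fun s _ => hmem s) (Set.mem_univ t) (Set.mem_univ 0)
    rw [him t, him 0] at this
    have h2pi : (2 * Real.pi) ≠ 0 := by positivity
    exact_mod_cast mul_right_cancel₀ h2pi this
  refine ⟨fun k => n k 0, ?_, ?_⟩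
  · intro k t
    rw [hn k t, hconst k t]
    ring
  · intro k t
    set v : EuclideanSpace ℝ (Fin d) :=
      (WithLp.equiv 2 (Fin d → ℝ)).symm (fun j => ((n j 0 : ℤ) : ℝ)) with hv
    have hinner : (⟪t + e k, v⟫ : ℝ) = ⟪t, v⟫ + 2 * Real.pi * (n k 0 : ℝ) := by
      rw [inner_add_left, he]
      rw [real_inner_smul_left]
      have : (⟪EuclideanSpace.single k (1 : ℝ), v⟫ : ℝ) = (n k 0 : ℝ) := by
        rw [EuclideanSpace.inner_single_left]
        simp [hv]
      rw [this]
    have hLL : L (t + e k) = L t + 2 * Real.pi * Complex.I * (n k 0 : ℂ) := by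
      have := hn k t
      rw [hconst k t] at this
      linear_combination this
    rw [hinner, hLL]
    push_cast
    ring
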